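/- For every real c > 0, the series ∑_{n=1}^∞ P_n(c) converges and 1 + ∑_{n=1}^∞ P_n(c) ≥ √(2/(3c)). -/

import Mathlib

open Real MeasureTheory Set Filter Topology

/-- Partial product `P n c = ∏_{j=1}^{n} 1/(1 + j·c)`, with `P 0 c = 1`. -/
noncomputable def partialProd (n : ℕ) (c : ℝ) : ℝ :=
  ∏ j ∈ Finset.Icc 1 n, (1 + (j : ℝ) * c)⁻¹

lemma pp_pos {c : ℝ} (hc : 0 < c) (n : ℕ) : 0 < partialProd n c := by
  apply Finset.prod_pos
  intro j hj
  have : (0:ℝ) ≤ (j:ℝ) * c := by positivity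
  positivity

lemma pp_le_geom {c : ℝ} (hc : 0 < c) (n : ℕ) : partialProd n c ≤ ((1+c)⁻¹) ^ n := by
  have h1c : (0:ℝ) < 1 + c := by linarith
  calc partialProd n c ≤ ∏ _j ∈ Finset.Icc 1 n, (1+c)⁻¹ := by
        apply Finset.prod_le_prod
        · intro j hj
          have : (0:ℝ) ≤ (j:ℝ) * c := by positivity
          positivity
        · intro j hj
          have hj1 : (1:ℕ) ≤ j := (Finset.mem_Icc.mp hj).1
          have h1j : (1:ℝ) ≤ (j:ℝ) := by exact_mod_cast hj1
          apply inv_anti₀ h1c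
          nlinarith
    _ = ((1+c)⁻¹) ^ n := by
        rw [Finset.prod_const, Nat.card_Icc]
        norm_num

lemma sum_Icc_id (m : ℕ) : ∑ j ∈ Finset.Icc 1 m, (j:ℝ) = m * (m+1) / 2 := by
  induction m with
  | zero => simp
  | succ k ih =>
    rw [Finset.sum_Icc_succ_top (by omega : 1 ≤ k + 1), ih]
    push_cast
    ring

lemma exp_le_pp {c : ℝ} (hc : 0 < c) (m : ℕ) :
    Real.exp (-(c/2) * ((m:ℝ)+1)^2) ≤ partialProd m c := by
  have hprod_pos : (0:ℝ) < ∏ j ∈ Finset.Icc 1 m, (1 + (j:ℝ) * c) := by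
    apply Finset.prod_pos
    intro j hj
    have : (0:ℝ) ≤ (j:ℝ) * c := by positivity
    linarith
  have h1 : ∏ j ∈ Finset.Icc 1 m, (1 + (j:ℝ) * c) ≤ Real.exp ((c/2) * ((m:ℝ)+1)^2) := by
    calc ∏ j ∈ Finset.Icc 1 m, (1 + (j:ℝ) * c)
        ≤ ∏ j ∈ Finset.Icc 1 m, Real.exp ((j:ℝ) * c) := by
          apply Finset.prod_le_prod
          · intro j hj
            have : (0:ℝ) ≤ (j:ℝ) * c := by positivity
            linarith
          · intro j hj
            have := Real.add_one_le_exp ((j:ℝ) * c)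
            linarith
      _ = Real.exp (∑ j ∈ Finset.Icc 1 m, (j:ℝ) * c) := by
          rw [Real.exp_sum]
      _ ≤ Real.exp ((c/2) * ((m:ℝ)+1)^2) := by
          apply Real.exp_le_exp.mpr
          rw [← Finset.sum_mul, sum_Icc_id]
          have hm : (0:ℝ) ≤ (m:ℝ) + 1 := by positivity
          nlinarith [mul_nonneg hc.le hm]
  have h2 : partialProd m c = (∏ j ∈ Finset.Icc 1 m, (1 + (j:ℝ) * c))⁻¹ := by
    rw [partialProd, ← Finset.prod_inv_distrib]
  have h3 : -(c/2) * ((m:ℝ)+1)^2 = -((c/2) * ((m:ℝ)+1)^2) := by ring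
  rw [h2, h3, Real.exp_neg]
  exact inv_anti₀ hprod_pos h1

lemma pp_summable {c : ℝ} (hc : 0 < c) : Summable (fun n : ℕ => partialProd (n + 1) c) := by
  have h1c : (0:ℝ) < 1 + c := by linarith
  have hr : (1+c)⁻¹ < 1 := by
    rw [inv_lt_one_iff₀]; right; linarith
  have hs : Summable (fun n : ℕ => (1+c)⁻¹ * ((1+c)⁻¹) ^ n) :=
    (summable_geometric_of_lt_one (by positivity) hr).mul_left _
  apply hs.of_nonneg_of_le (fun n => (pp_pos hc (n+1)).le)
  intro n
  calc partialProd (n+1) c ≤ ((1+c)⁻¹)^(n+1) := pp_le_geom hc (n+1)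
    _ = (1+c)⁻¹ * ((1+c)⁻¹)^n := by ring


lemma caseA {c : ℝ} (hc : 0 < c) (h316 : 3/16 ≤ c) :
    Real.sqrt (2 / (3 * c)) ≤ 1 + ∑' n : ℕ, partialProd (n + 1) c := by
  have hts : ∀ s : Finset ℕ, ∑ n ∈ s, partialProd (n+1) c ≤ ∑' n : ℕ, partialProd (n + 1) c :=
    fun s => Summable.sum_le_tsum s (fun n _ => (pp_pos hc (n+1)).le) (pp_summable hc)
  by_cases h23 : 2/3 < c
  · have h1 : Real.sqrt (2/(3*c)) ≤ 1 := by
      rw [Real.sqrt_le_left (by norm_num)]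
      rw [div_le_iff₀ (by linarith)]
      linarith
    have h2 : (0:ℝ) ≤ ∑' n : ℕ, partialProd (n + 1) c := by
      have := hts ∅; simpa using this
    linarith
  · push_neg at h23
    have e1 : partialProd 1 c = (1+c)⁻¹ := by
      rw [partialProd, show Finset.Icc 1 1 = {1} from rfl]; norm_num
    have e2 : partialProd 2 c = ((1+c) * (1+2*c))⁻¹ := by
      rw [partialProd, show Finset.Icc 1 2 = {1, 2} from rfl]
      rw [mul_inv]
      norm_num [Finset.prod_insert]; ring
    have e3 : partialProd 3 c = ((1+c) * (1+2*c) * (1+3*c))⁻¹ := by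
      rw [partialProd, show Finset.Icc 1 3 = {1, 2, 3} from rfl]
      rw [mul_inv, mul_inv]
      norm_num [Finset.prod_insert]; ring
    have b1 : (3/5 : ℝ) ≤ partialProd 1 c := by
      rw [e1, show (3/5:ℝ) = (5/3:ℝ)⁻¹ by norm_num]
      exact inv_anti₀ (by linarith) (by linarith)
    have b2 : (9/35 : ℝ) ≤ partialProd 2 c := by
      rw [e2, show (9/35:ℝ) = (35/9:ℝ)⁻¹ by norm_num]
      exact inv_anti₀ (mul_pos (by linarith) (by linarith)) (by nlinarith)
    have b3 : (3/35 : ℝ) ≤ partialProd 3 c := by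
      rw [e3, show (3/35:ℝ) = (35/3:ℝ)⁻¹ by norm_num]
      have hq : (1+c) * (1+2*c) * (1+3*c) ≤ 35/3 := by
        nlinarith [mul_nonneg (sub_nonneg.2 h23) hc.le, mul_nonneg (sub_nonneg.2 h23) (mul_nonneg hc.le hc.le), mul_nonneg hc.le hc.le]
      exact inv_anti₀ (mul_pos (mul_pos (by linarith) (by linarith)) (by linarith)) hq
    have hsum3 : (33/35 : ℝ) ≤ ∑' n : ℕ, partialProd (n + 1) c := by
      have := hts (Finset.range 3)
      rw [Finset.sum_range_succ, Finset.sum_range_succ, Finset.sum_range_one] at this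
      norm_num at this
      linarith
    have hL : Real.sqrt (2/(3*c)) ≤ 68/35 := by
      rw [Real.sqrt_le_left (by norm_num)]
      rw [div_le_iff₀ (by linarith)]
      nlinarith
    linarith


lemma caseB {c : ℝ} (hc : 0 < c) (h316 : c ≤ 3/16) :
    Real.sqrt (2 / (3 * c)) ≤ 1 + ∑' n : ℕ, partialProd (n + 1) c := by
  set f : ℝ → ℝ := fun x => Real.exp (-(c/2) * x^2) with hf
  have hb : (0:ℝ) < c/2 := by linarith
  have hInt : Integrable f := integrable_exp_neg_mul_sq hb
  have hanti : AntitoneOn f (Set.Ici (0:ℝ)) := by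
    intro x hx y hy hxy
    simp only [hf]
    apply Real.exp_le_exp.mpr
    simp only [mem_Ici] at hx hy
    have hxy2 : x^2 ≤ y^2 := by nlinarith
    nlinarith [mul_le_mul_of_nonneg_left hxy2 hb.le]
  -- step 1: tsum ≥ ∫ x in Ioi 2, f x
  have step1 : ∫ x in Ioi (2:ℝ), f x ≤ ∑' n : ℕ, partialProd (n + 1) c := by
    have hlim : Tendsto (fun N : ℕ => ∫ x in (2:ℝ)..(2 + N), f x) atTop
        (𝓝 (∫ x in Ioi (2:ℝ), f x)) := by
      apply intervalIntegral_tendsto_integral_Ioi 2 (hInt.integrableOn)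
      exact tendsto_atTop_add_const_left _ 2 tendsto_natCast_atTop_atTop
    apply le_of_tendsto hlim
    filter_upwards with N
    calc ∫ x in (2:ℝ)..(2 + N), f x ≤ ∑ i ∈ Finset.range N, f (2 + i) := by
          apply AntitoneOn.integral_le_sum
          apply hanti.mono
          intro x hx
          exact le_trans (by norm_num) hx.1
      _ ≤ ∑ i ∈ Finset.range N, partialProd (i + 1) c := by
          apply Finset.sum_le_sum
          intro i _
          have := exp_le_pp hc (i + 1)
          have he : f (2 + (i:ℝ)) = Real.exp (-(c/2) * (((i:ℕ):ℝ) + 1 + 1)^2) := by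
            simp only [hf]; ring_nf
          rw [he]
          convert this using 3
          · rfl
          push_cast; ring
      _ ≤ ∑' n : ℕ, partialProd (n + 1) c :=
          Summable.sum_le_tsum _ (fun n _ => (pp_pos hc (n+1)).le) (pp_summable hc)
  -- step 2: ∫ x in Ioi 2, f x ≥ sqrt (π / (c/2)) / 2 - 2
  have step2 : Real.sqrt (π / (c/2)) / 2 - 2 ≤ ∫ x in Ioi (2:ℝ), f x := by
    have hsplit : ∫ x in Ioi (0:ℝ), f x
        = (∫ x in Ioc (0:ℝ) 2, f x) + ∫ x in Ioi (2:ℝ), f x := by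
      rw [← setIntegral_union (Ioc_disjoint_Ioi le_rfl) measurableSet_Ioi
        hInt.integrableOn hInt.integrableOn, Ioc_union_Ioi_eq_Ioi (by norm_num : (0:ℝ) ≤ 2)]
    have hg : ∫ x in Ioi (0:ℝ), f x = Real.sqrt (π / (c/2)) / 2 := integral_gaussian_Ioi (c/2)
    have hJ : ∫ x in Ioc (0:ℝ) 2, f x ≤ 2 := by
      calc ∫ x in Ioc (0:ℝ) 2, f x ≤ ∫ _x in Ioc (0:ℝ) 2, (1:ℝ) := by
            apply setIntegral_mono_on hInt.integrableOn (integrableOn_const (by simp))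
              measurableSet_Ioc
            intro x _
            simp only [hf]
            rw [← Real.exp_zero]
            apply Real.exp_le_exp.mpr
            nlinarith [sq_nonneg x]
        _ = 2 := by simp
    linarith [hsplit, hg, hJ]
  -- step 3: numeric inequality
  have step3 : Real.sqrt (2 / (3 * c)) ≤ Real.sqrt (π / (c/2)) / 2 - 1 := by
    have hsc : 0 < Real.sqrt c := Real.sqrt_pos.mpr hc
    have h1 : Real.sqrt (2 / (3 * c)) = Real.sqrt (2/3) / Real.sqrt c := by
      rw [show 2 / (3*c) = (2/3) / c by ring, Real.sqrt_div (by norm_num)]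
    have h2 : Real.sqrt (π / (c/2)) = Real.sqrt (2*π) / Real.sqrt c := by
      rw [show π / (c/2) = (2*π) / c by field_simp, Real.sqrt_div (by positivity)]
    have hcb : Real.sqrt c ≤ Real.sqrt (3/16) := Real.sqrt_le_sqrt h316
    have key : Real.sqrt (2/3) + Real.sqrt (3/16) ≤ Real.sqrt (2*π) / 2 := by
      set a := Real.sqrt (2/3) with ha
      set b := Real.sqrt (3/16) with hb'
      set p := Real.sqrt (2*π) with hp
      have ha2 : a^2 = 2/3 := Real.sq_sqrt (by norm_num)
      have hb2 : b^2 = 3/16 := Real.sq_sqrt (by norm_num)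
      have hp2 : p^2 = 2*π := Real.sq_sqrt (by positivity)
      have hab : (a*b)^2 = 1/8 := by rw [mul_pow, ha2, hb2]; norm_num
      have hab0 : 0 ≤ a*b := mul_nonneg (Real.sqrt_nonneg _) (Real.sqrt_nonneg _)
      have habu : a*b ≤ 0.35356 := by nlinarith
      have hpi : 3.141592 < π := Real.pi_gt_d6
      have hp0 : 0 ≤ p := Real.sqrt_nonneg _
      have ha0 : 0 ≤ a := Real.sqrt_nonneg _
      have hb0 : 0 ≤ b := Real.sqrt_nonneg _
      nlinarith [sq_nonneg (p - (2*a + 2*b))]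
    have key2 : Real.sqrt (2/3) + Real.sqrt c ≤ Real.sqrt (2*π) / 2 := by linarith
    rw [h1, h2]
    have h3 : (Real.sqrt (2/3) + Real.sqrt c)/Real.sqrt c ≤ (Real.sqrt (2*π)/2)/Real.sqrt c := by
      gcongr
    rw [add_div, div_self hsc.ne'] at h3
    have h5 : (Real.sqrt (2*π)/2)/Real.sqrt c = Real.sqrt (2*π)/Real.sqrt c/2 := by ring
    linarith
  linarith [step1, step2, step3]


/-- for every real `c > 0`, the series `∑_{n=1}^∞ P_n(c)` converges
and `1 + ∑_{n=1}^∞ P_n(c) ≥ √(2/(3c))`. -/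
theorem statement6 (c : ℝ) (hc : 0 < c) :
    Summable (fun n : ℕ => partialProd (n + 1) c) ∧
      Real.sqrt (2 / (3 * c)) ≤ 1 + ∑' n : ℕ, partialProd (n + 1) c := by
  refine ⟨pp_summable hc, ?_⟩
  rcases le_or_gt c (3/16) with h | h
  · exact caseB hc h
  · exact caseA hc h.le
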